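/- For every integer k ≥ 0, the following identity of k-linear endomorphisms of the polynomial ring A[x_1,…,x_d] holds: s(s+1)⋯(s+k) = (−1)^{k+1} Σ_{α ∈ ℕ^d, |α| = k+1} ((k+1)!/(α_1!⋯α_d!)) · (x^α·) ∘ ∂^α, where s = −θ; equivalently, ∏_{j=0}^{k} (θ − j·id) = Σ_{|α| = k+1} multinomial(α) · (x^α·) ∘ ∂^α. -/

import Mathlib

open MvPolynomial

noncomputable section

/-- Multiplication by the monomial `x^α` on `A[x_1,…,x_d]`, as an `A`-linear
endomorphism. -/
def mulOp (A : Type) [CommRing A] (d : ℕ) (α : Fin d → ℕ) :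
    Module.End A (MvPolynomial (Fin d) A) :=
  LinearMap.mulLeft A (∏ i : Fin d, (X i : MvPolynomial (Fin d) A) ^ α i)

/-- `∂^α = ∂_1^{α_1} ∘ ⋯ ∘ ∂_d^{α_d}` on `A[x_1,…,x_d]`, as an `A`-linear
endomorphism. -/
def pdOp (A : Type) [CommRing A] (d : ℕ) (α : Fin d → ℕ) :
    Module.End A (MvPolynomial (Fin d) A) :=
  (List.ofFn fun i : Fin d =>
    ((pderiv i).toLinearMap : Module.End A (MvPolynomial (Fin d) A)) ^ α i).prod

/-- The Euler operator `θ = Σ_i (x_i·) ∘ ∂_i`. -/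
def eulerOp (A : Type) [CommRing A] (d : ℕ) : Module.End A (MvPolynomial (Fin d) A) :=
  ∑ i : Fin d,
    LinearMap.mulLeft A (X i : MvPolynomial (Fin d) A) *
      ((pderiv i).toLinearMap : Module.End A (MvPolynomial (Fin d) A))

/-! ### Auxiliary combinatorial lemmas -/

lemma aux_prod_range_sub_cast (N k : ℕ) :
    ∏ j ∈ Finset.range (k + 1), ((N : ℤ) - j) = N.descFactorial (k + 1) := by
  induction k with
  | zero => simp
  | succ k ih =>
    rw [Finset.prod_range_succ, ih]
    rcases le_or_gt (k + 1) N with h | h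
    · conv_rhs => rw [Nat.descFactorial_succ]
      push_cast [Nat.cast_sub h]
      ring
    · rw [Nat.descFactorial_eq_zero_iff_lt.mpr h,
        Nat.descFactorial_eq_zero_iff_lt.mpr (Nat.lt_succ_of_lt h)]
      simp

lemma aux_vandermonde_pi {ι : Type*} [DecidableEq ι] (m : ι → ℕ) (s : Finset ι) :
    ∀ n : ℕ, ∑ α ∈ s.piAntidiag n, ∏ i ∈ s, (m i).choose (α i)
      = (∑ i ∈ s, m i).choose n := by
  induction s using Finset.cons_induction with
  | empty =>
    intro n
    rcases Nat.eq_zero_or_pos n with rfl | h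
    · simp
    · rw [Finset.piAntidiag_empty_of_ne_zero h.ne']
      simp [Nat.choose_eq_zero_of_lt h]
  | cons i s hi ih =>
    intro n
    rw [Finset.piAntidiag_cons hi n, Finset.sum_disjiUnion, Finset.sum_cons,
      Nat.add_choose_eq]
    refine Finset.sum_congr rfl fun p hp => ?_
    rw [Finset.sum_map]
    have : ∀ g ∈ s.piAntidiag p.2,
        ∏ j ∈ Finset.cons i s hi, (m j).choose
          ((addRightEmbedding fun t => if t = i then p.1 else 0) g j)
        = (m i).choose p.1 * ∏ j ∈ s, (m j).choose (g j) := by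
      intro g hg
      obtain ⟨-, hg2⟩ := Finset.mem_piAntidiag.mp hg
      have hgi : g i = 0 := by
        by_contra hne
        exact hi (hg2 i hne)
      rw [Finset.prod_cons]
      congr 1
      · simp [addRightEmbedding_apply, hgi]
      · refine Finset.prod_congr rfl fun j hj => ?_
        have : j ≠ i := fun h => hi (h ▸ hj)
        simp [addRightEmbedding_apply, this]
    rw [Finset.sum_congr rfl this, ← Finset.mul_sum, ih p.2]

lemma aux_multinomial_desc_sum (d : ℕ) (m : Fin d → ℕ) (n : ℕ) :
    ∑ α ∈ Finset.Nat.antidiagonalTuple d n,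
        Nat.multinomial Finset.univ α * ∏ i, (m i).descFactorial (α i)
      = (∑ i, m i).descFactorial n := by
  rw [← Finset.piAntidiag_univ_fin_eq_antidiagonalTuple n d]
  have key : ∀ α ∈ Finset.univ.piAntidiag n,
      Nat.multinomial Finset.univ α * ∏ i, (m i).descFactorial (α i)
        = n.factorial * ∏ i, (m i).choose (α i) := by
    intro α hα
    obtain ⟨hsum, -⟩ := Finset.mem_piAntidiag.mp hα
    calc Nat.multinomial Finset.univ α * ∏ i, (m i).descFactorial (α i)
        = Nat.multinomial Finset.univ α * ∏ i, ((α i).factorial * (m i).choose (α i)) := by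
          simp_rw [Nat.descFactorial_eq_factorial_mul_choose]
      _ = ((∏ i, (α i).factorial) * Nat.multinomial Finset.univ α) * ∏ i, (m i).choose (α i) := by
          rw [Finset.prod_mul_distrib]; ring
      _ = n.factorial * ∏ i, (m i).choose (α i) := by
          rw [Nat.multinomial_spec, hsum]
  rw [Finset.sum_congr rfl key, ← Finset.mul_sum, aux_vandermonde_pi m Finset.univ n,
    Nat.descFactorial_eq_factorial_mul_choose]

/-! ### Action of the operators on monomials -/

variable {A : Type} [CommRing A] {d : ℕ}

lemma aux_pderiv_pow_monomial (i : Fin d) (n : ℕ) (m : Fin d →₀ ℕ) (a : A) :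
    (((pderiv i).toLinearMap : Module.End A (MvPolynomial (Fin d) A)) ^ n) (monomial m a)
      = monomial (m - Finsupp.single i n) (((m i).descFactorial n) • a) := by
  induction n generalizing m a with
  | zero => simp
  | succ n ih =>
    rw [pow_succ', Module.End.mul_apply, ih]
    simp only [Derivation.coeFn_coe, pderiv_monomial]
    rw [tsub_tsub, ← Finsupp.single_add, Finsupp.tsub_apply, Finsupp.single_eq_same]
    congr 1
    rw [Nat.descFactorial_succ, nsmul_eq_mul, nsmul_eq_mul]
    push_cast
    ring

lemma aux_pd_list_monomial (β : Fin d → ℕ) (m : Fin d →₀ ℕ) (a : A) :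
    ∀ l : List (Fin d), l.Nodup →
      ((l.map fun i => ((pderiv i).toLinearMap : Module.End A (MvPolynomial (Fin d) A)) ^ β i).prod)
          (monomial m a)
        = monomial (m - ∑ i ∈ l.toFinset, Finsupp.single i (β i))
            ((∏ i ∈ l.toFinset, (m i).descFactorial (β i)) • a)
  | [], _ => by simp
  | i :: l, h => by
    obtain ⟨hi, hl⟩ := List.nodup_cons.mp h
    have hi' : i ∉ l.toFinset := by simpa using hi
    rw [List.map_cons, List.prod_cons, Module.End.mul_apply,
      aux_pd_list_monomial β m a l hl, aux_pderiv_pow_monomial]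
    have hS : (m - ∑ j ∈ l.toFinset, Finsupp.single j (β j)) i = m i := by
      rw [Finsupp.tsub_apply, Finset.sum_apply']
      rw [Finset.sum_eq_zero fun j hj => Finsupp.single_eq_of_ne (by rintro rfl; exact hi' hj)]
      simp
    rw [hS, List.toFinset_cons, Finset.sum_insert hi', Finset.prod_insert hi',
      tsub_tsub, smul_smul, add_comm]

lemma aux_pdOp_monomial (α : Fin d → ℕ) (m : Fin d →₀ ℕ) (a : A) :
    pdOp A d α (monomial m a)
      = monomial (m - ∑ i : Fin d, Finsupp.single i (α i))
          ((∏ i : Fin d, (m i).descFactorial (α i)) • a) := by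
  rw [pdOp, List.ofFn_eq_map,
    aux_pd_list_monomial α m a (List.finRange d) (List.nodup_finRange d),
    List.toFinset_finRange]

lemma aux_op_monomial (α : Fin d → ℕ) (m : Fin d →₀ ℕ) (a : A) :
    (mulOp A d α * pdOp A d α) (monomial m a)
      = (∏ i : Fin d, (m i).descFactorial (α i)) • monomial m a := by
  rw [Module.End.mul_apply, aux_pdOp_monomial, mulOp, LinearMap.mulLeft_apply]
  have hX : (∏ i : Fin d, (X i : MvPolynomial (Fin d) A) ^ α i)
      = monomial (∑ i : Fin d, Finsupp.single i (α i)) 1 := by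
    rw [monomial_sum_one]
    exact Finset.prod_congr rfl fun i _ => X_pow_eq_monomial
  rw [hX, monomial_mul, one_mul]
  by_cases h : ∀ i, α i ≤ m i
  · have hle : (∑ i : Fin d, Finsupp.single i (α i)) ≤ m := by
      rw [Finsupp.le_def]
      intro j
      rw [Finset.sum_apply']
      simpa [Finsupp.single_apply, Finset.sum_ite_eq'] using h j
    rw [add_tsub_cancel_of_le hle]
    exact map_nsmul (monomial m) _ a
  · push_neg at h
    obtain ⟨i, hi⟩ := h
    have hc : (∏ i : Fin d, (m i).descFactorial (α i)) = 0 :=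
      Finset.prod_eq_zero (Finset.mem_univ i) (Nat.descFactorial_eq_zero_iff_lt.mpr hi)
    rw [hc]
    simp

lemma aux_eulerOp_monomial (m : Fin d →₀ ℕ) (a : A) :
    eulerOp A d (monomial m a) = (∑ i : Fin d, m i) • monomial m a := by
  rw [eulerOp, LinearMap.sum_apply, Finset.sum_smul]
  refine Finset.sum_congr rfl fun i _ => ?_
  rw [Module.End.mul_apply, LinearMap.mulLeft_apply]
  simp only [Derivation.coeFn_coe, pderiv_monomial]
  rcases Nat.eq_zero_or_pos (m i) with h | h
  · simp [h]
  · have hle : Finsupp.single i 1 ≤ m := by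
      rw [Finsupp.le_def]
      intro j
      rcases eq_or_ne i j with rfl | hj
      · simpa [Nat.one_le_iff_ne_zero, Nat.pos_iff_ne_zero] using h
      · simp [Finsupp.single_apply, hj]
    rw [show (X i : MvPolynomial (Fin d) A) = monomial (Finsupp.single i 1) 1 by
        rw [← pow_one (X i), X_pow_eq_monomial],
      monomial_mul, one_mul, add_tsub_cancel_of_le hle, ← map_nsmul (monomial m) (m i) a]
    congr 1
    rw [nsmul_eq_mul, mul_comm]

lemma aux_lhs_monomial (k : ℕ) (m : Fin d →₀ ℕ) (a : A) :
    ((List.range (k + 1)).map fun j : ℕ =>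
        eulerOp A d - j • (1 : Module.End A (MvPolynomial (Fin d) A))).prod (monomial m a)
      = (∏ j ∈ Finset.range (k + 1), (((∑ i : Fin d, m i : ℕ) : ℤ) - j)) • monomial m a := by
  set N : ℕ := ∑ i : Fin d, m i with hN
  have hfac : ∀ j : ℕ, (eulerOp A d - j • (1 : Module.End A (MvPolynomial (Fin d) A)))
      (monomial m a) = ((N : ℤ) - j) • monomial m a := by
    intro j
    rw [LinearMap.sub_apply, LinearMap.smul_apply, Module.End.one_apply,
      aux_eulerOp_monomial, sub_smul, natCast_zsmul, natCast_zsmul]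
  induction k with
  | zero =>
    rw [List.range_succ, List.range_zero]
    simp only [List.nil_append, List.map_cons, List.map_nil, List.prod_cons, List.prod_nil,
      mul_one]
    rw [hfac 0]
    simp
  | succ k ih =>
    rw [List.range_succ, List.map_append, List.prod_append, List.map_singleton,
      List.prod_singleton, Module.End.mul_apply, hfac (k + 1), map_zsmul, ih,
      smul_smul]
    congr 1
    rw [Finset.prod_range_succ (fun j : ℕ => ((N : ℤ) - j)) (k + 1)]
    ring

lemma aux_list_prod_map_neg {R : Type*} [Ring R] :
    ∀ l : List R, (l.map Neg.neg).prod = (-1 : R) ^ l.length * l.prod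
  | [] => by simp
  | a :: l => by
    rw [List.map_cons, List.prod_cons, aux_list_prod_map_neg l, List.prod_cons,
      List.length_cons, pow_succ']
    calc -a * ((-1 : R) ^ l.length * l.prod)
        = (-1 : R) * (a * ((-1 : R) ^ l.length * l.prod)) := by rw [neg_one_mul, neg_mul]
      _ = (-1 : R) * ((a * (-1 : R) ^ l.length) * l.prod) := by rw [mul_assoc]
      _ = (-1 : R) * (((-1 : R) ^ l.length * a) * l.prod) := by
          rw [((Commute.neg_one_left a).pow_left l.length).eq]
      _ = -1 * (-1 : R) ^ l.length * (a * l.prod) := by rw [mul_assoc, ← mul_assoc, mul_assoc]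

/-- For every `k ≥ 0`, with `s = −θ` (`θ` the Euler operator), one has
`s(s+1)⋯(s+k) = (−1)^{k+1} Σ_{|α| = k+1} ((k+1)!/(α_1!⋯α_d!)) (x^α·) ∘ ∂^α` as `A`-linear
endomorphisms of `A[x_1,…,x_d]`; equivalently,
`∏_{j=0}^{k} (θ − j·id) = Σ_{|α| = k+1} multinomial(α) (x^α·) ∘ ∂^α`. -/
theorem statement14 (A : Type) [CommRing A] (d : ℕ) (hd : 1 ≤ d) (k : ℕ) :
    ((List.range (k + 1)).map fun j : ℕ =>
        -(eulerOp A d) + j • (1 : Module.End A (MvPolynomial (Fin d) A))).prod =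
      ((-1 : ℤ) ^ (k + 1)) •
        ∑ α ∈ Finset.Nat.antidiagonalTuple d (k + 1),
          (Nat.multinomial Finset.univ α) • (mulOp A d α * pdOp A d α) ∧
    ((List.range (k + 1)).map fun j : ℕ =>
        eulerOp A d - j • (1 : Module.End A (MvPolynomial (Fin d) A))).prod =
      ∑ α ∈ Finset.Nat.antidiagonalTuple d (k + 1),
        (Nat.multinomial Finset.univ α) • (mulOp A d α * pdOp A d α) := by
  have main : ((List.range (k + 1)).map fun j : ℕ =>
        eulerOp A d - j • (1 : Module.End A (MvPolynomial (Fin d) A))).prod =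
      ∑ α ∈ Finset.Nat.antidiagonalTuple d (k + 1),
        (Nat.multinomial Finset.univ α) • (mulOp A d α * pdOp A d α) := by
    apply MvPolynomial.linearMap_ext
    intro s
    apply LinearMap.ext
    intro a
    rw [LinearMap.comp_apply, LinearMap.comp_apply, aux_lhs_monomial,
      aux_prod_range_sub_cast, LinearMap.sum_apply]
    have : ∀ α ∈ Finset.Nat.antidiagonalTuple d (k + 1),
        ((Nat.multinomial Finset.univ α) • (mulOp A d α * pdOp A d α)) (monomial s a)
          = (Nat.multinomial Finset.univ α * ∏ i : Fin d, (s i).descFactorial (α i)) •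
              monomial s a := by
      intro α _
      rw [LinearMap.smul_apply, aux_op_monomial, smul_smul]
    rw [Finset.sum_congr rfl this, ← Finset.sum_smul, aux_multinomial_desc_sum,
      natCast_zsmul]
  refine ⟨?_, main⟩
  have hfun : (fun j : ℕ => -(eulerOp A d) + j • (1 : Module.End A (MvPolynomial (Fin d) A)))
      = Neg.neg ∘ fun j : ℕ =>
          eulerOp A d - j • (1 : Module.End A (MvPolynomial (Fin d) A)) := by
    funext j
    show _ = -(eulerOp A d - j • (1 : Module.End A (MvPolynomial (Fin d) A)))
    rw [neg_sub, neg_add_eq_sub]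
  rw [hfun, ← List.map_map, aux_list_prod_map_neg, List.length_map, List.length_range,
    main, zsmul_eq_mul]
  congr 1
  push_cast
  rfl


end
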